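/- Let θ_0, θ_1, ..., θ_m be real numbers with θ_1 < θ_2 < ... < θ_m, and let A, B_1, ..., B_m ≥ 0. Suppose δ^{θ_0} A ≤ Σ_{i=1}^m δ^{θ_i} B_i for all δ > 0. Then A ≤ C_m ( Σ_{i: θ_i = θ_0} B_i + Σ_{(i,j): θ_i < θ_0 < θ_j} B_i^{(θ_j-θ_0)/(θ_j-θ_i)} B_j^{(θ_0-θ_i)/(θ_j-θ_i)} ), where C_m depends only on m. -/

import Mathlib

open Filter Finset Real Topology

private lemma aux_limit {ι : Type*} (s : Finset ι) (c B : ι → ℝ) (Z A : ℝ)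
    (hc : ∀ i ∈ s, 0 < c i)
    (h : ∀ t : ℝ, 1 ≤ t → A ≤ Z + ∑ i ∈ s, t ^ (-(c i)) * B i) : A ≤ Z := by
  have htend : Tendsto (fun t : ℝ => Z + ∑ i ∈ s, t ^ (-(c i)) * B i) atTop (𝓝 (Z + 0)) := by
    refine tendsto_const_nhds.add ?_
    have h0 : Tendsto (fun t : ℝ => ∑ i ∈ s, t ^ (-(c i)) * B i) atTop
        (𝓝 (∑ i ∈ s, (0:ℝ))) := by
      refine tendsto_finset_sum _ fun i hi => ?_
      simpa using (tendsto_rpow_neg_atTop (hc i hi)).mul_const (B i)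
    simpa using h0
  have hA : A ≤ Z + 0 := ge_of_tendsto htend
    (by filter_upwards [eventually_ge_atTop (1:ℝ)] with t ht using h t ht)
  simpa using hA

private lemma geom_calc {a b θ₀ Bi Bj : ℝ} (ha : a < θ₀) (hb : θ₀ < b)
    (hBi : 0 < Bi) (hBj : 0 < Bj) :
    ((Bi / Bj) ^ ((b - a)⁻¹)) ^ (a - θ₀) * Bi
      = Bi ^ ((b - θ₀) / (b - a)) * Bj ^ ((θ₀ - a) / (b - a)) ∧
    ((Bi / Bj) ^ ((b - a)⁻¹)) ^ (b - θ₀) * Bj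
      = Bi ^ ((b - θ₀) / (b - a)) * Bj ^ ((θ₀ - a) / (b - a)) := by
  have hba : (0:ℝ) < b - a := by linarith
  have hba' : b - a ≠ 0 := ne_of_gt hba
  have hq : (0:ℝ) ≤ Bi / Bj := (div_pos hBi hBj).le
  have e : ∀ z : ℝ, ((Bi / Bj) ^ ((b - a)⁻¹)) ^ z = Bi ^ (z / (b-a)) / Bj ^ (z / (b-a)) := by
    intro z
    rw [← Real.rpow_mul hq, Real.div_rpow hBi.le hBj.le]
    congr 2 <;> ring
  have hBjc : ∀ z : ℝ, (0:ℝ) < Bj ^ z := fun z => Real.rpow_pos_of_pos hBj z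
  constructor
  · rw [e]
    have e1 : (b - θ₀) / (b-a) = (a - θ₀)/(b-a) + 1 := by field_simp; ring
    have e2 : (θ₀ - a) / (b-a) = -((a - θ₀)/(b-a)) := by ring
    rw [e1, e2, Real.rpow_add hBi, Real.rpow_one, Real.rpow_neg hBj.le]
    field_simp
  · rw [e]
    have e2 : (θ₀ - a) / (b-a) = -((b - θ₀)/(b-a)) + 1 := by field_simp; ring
    rw [e2, Real.rpow_add hBj, Real.rpow_one, Real.rpow_neg hBj.le]
    field_simp

theorem stmt18 (m : ℕ) :
    ∃ C : ℝ, 0 < C ∧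
    ∀ (θ₀ : ℝ) (θ : Fin m → ℝ) (A : ℝ) (B : Fin m → ℝ),
      StrictMono θ → 0 ≤ A → (∀ i, 0 ≤ B i) →
      (∀ δ : ℝ, 0 < δ → δ ^ θ₀ * A ≤ ∑ i, δ ^ (θ i) * B i) →
      A ≤ C * ((∑ i ∈ Finset.univ.filter fun i => θ i = θ₀, B i) +
        ∑ p ∈ Finset.univ.filter (fun p : Fin m × Fin m => θ p.1 < θ₀ ∧ θ₀ < θ p.2),
          B p.1 ^ ((θ p.2 - θ₀) / (θ p.2 - θ p.1)) *
            B p.2 ^ ((θ₀ - θ p.1) / (θ p.2 - θ p.1))) := by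
  classical
  refine ⟨2 * m + 1, by positivity, ?_⟩
  intro θ₀ θ A B hθ hA hB hineq
  set FZ := Finset.univ.filter fun i => θ i = θ₀ with hFZdef
  set FN := Finset.univ.filter fun i => θ i < θ₀ with hFNdef
  set FP := Finset.univ.filter fun i => θ₀ < θ i with hFPdef
  set PR := Finset.univ.filter (fun p : Fin m × Fin m => θ p.1 < θ₀ ∧ θ₀ < θ p.2) with hPRdef
  set Zsum := ∑ i ∈ FZ, B i with hZdef
  set G : Fin m × Fin m → ℝ := fun p =>
    B p.1 ^ ((θ p.2 - θ₀) / (θ p.2 - θ p.1)) * B p.2 ^ ((θ₀ - θ p.1) / (θ p.2 - θ p.1))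
    with hGdef
  set Gsum := ∑ p ∈ PR, G p with hGsdef
  have hGnn : ∀ p ∈ PR, 0 ≤ G p := fun p _ =>
    mul_nonneg (Real.rpow_nonneg (hB _) _) (Real.rpow_nonneg (hB _) _)
  have hGsum : 0 ≤ Gsum := Finset.sum_nonneg hGnn
  have hZsum : 0 ≤ Zsum := Finset.sum_nonneg fun i _ => hB i
  -- splitting of sums
  have hsplit : ∀ f : Fin m → ℝ, (∑ i, f i) =
      (∑ i ∈ FZ, f i) + ((∑ i ∈ FN, f i) + (∑ i ∈ FP, f i)) := by
    intro f
    have h1 := Finset.sum_filter_add_sum_filter_not Finset.univ (fun i => θ i = θ₀) f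
    have h2 := Finset.sum_filter_add_sum_filter_not
      (Finset.univ.filter fun i => ¬ θ i = θ₀) (fun i => θ i < θ₀) f
    rw [Finset.filter_filter, Finset.filter_filter] at h2
    have e1 : (Finset.univ.filter fun i => ¬ θ i = θ₀ ∧ θ i < θ₀) = FN := by
      apply Finset.filter_congr
      intro i _
      constructor
      · rintro ⟨-, h⟩; exact h
      · intro h; exact ⟨ne_of_lt h, h⟩
    have e2 : (Finset.univ.filter fun i => ¬ θ i = θ₀ ∧ ¬ θ i < θ₀) = FP := by
      apply Finset.filter_congr
      intro i _
      constructor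
      · rintro ⟨h1', h2'⟩; exact lt_of_le_of_ne (not_lt.mp h2') (Ne.symm h1')
      · intro h; exact ⟨ne_of_gt h, not_lt.mpr h.le⟩
    rw [e1, e2] at h2
    rw [← h1, ← h2]
  -- key reduced inequality
  have key : ∀ δ : ℝ, 0 < δ →
      A ≤ Zsum + ((∑ i ∈ FN, δ ^ (θ i - θ₀) * B i) + (∑ i ∈ FP, δ ^ (θ i - θ₀) * B i)) := by
    intro δ hδ
    have h1 := hineq δ hδ
    have hd0 : (0:ℝ) < δ ^ θ₀ := Real.rpow_pos_of_pos hδ _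
    have h2 : A ≤ ∑ i, δ ^ (θ i - θ₀) * B i := by
      rw [← le_div_iff₀' hd0] at h1
      refine h1.trans (le_of_eq ?_)
      rw [Finset.sum_div]
      refine Finset.sum_congr rfl fun i _ => ?_
      rw [Real.rpow_sub hδ]
      ring
    rw [hsplit (fun i => δ ^ (θ i - θ₀) * B i)] at h2
    refine h2.trans (le_of_eq ?_)
    congr 1
    refine Finset.sum_congr rfl fun i hi => ?_
    have : θ i = θ₀ := (Finset.mem_filter.mp hi).2
    rw [this, sub_self, Real.rpow_zero, one_mul]
  -- it suffices to bound A by Zsum + 2m * Gsum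
  suffices hmain : A ≤ Zsum + 2 * m * Gsum by
    have hm0 : (0:ℝ) ≤ (m:ℝ) := Nat.cast_nonneg m
    nlinarith [hmain, hZsum, hGsum]
  have h2mG : (0:ℝ) ≤ 2 * m * Gsum := by positivity
  set N' := Finset.univ.filter fun i : Fin m => θ i < θ₀ ∧ 0 < B i with hN'def
  set P' := Finset.univ.filter fun i : Fin m => θ₀ < θ i ∧ 0 < B i with hP'def
  rcases N'.eq_empty_or_nonempty with hN | hN
  · -- no negative-side terms: send δ → 0 (i.e. t⁻¹, t → ∞)
    have hBN : ∀ i ∈ FN, B i = 0 := by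
      intro i hi
      by_contra hne
      have hpos : 0 < B i := lt_of_le_of_ne (hB i) (Ne.symm hne)
      have hmem : i ∈ N' :=
        Finset.mem_filter.mpr ⟨Finset.mem_univ i, (Finset.mem_filter.mp hi).2, hpos⟩
      rw [hN] at hmem
      exact absurd hmem (Finset.notMem_empty i)
    have hAZ : A ≤ Zsum := by
      refine aux_limit FP (fun j => θ j - θ₀) B Zsum A
        (fun j hj => sub_pos.mpr (Finset.mem_filter.mp hj).2) ?_
      intro t ht
      have ht0 : 0 < t := lt_of_lt_of_le one_pos ht
      have h := key t⁻¹ (inv_pos.mpr ht0)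
      have hFN0 : (∑ i ∈ FN, (t⁻¹) ^ (θ i - θ₀) * B i) = 0 :=
        Finset.sum_eq_zero fun i hi => by rw [hBN i hi, mul_zero]
      rw [hFN0, zero_add] at h
      refine h.trans (le_of_eq ?_)
      congr 1
      refine Finset.sum_congr rfl fun j hj => ?_
      rw [Real.inv_rpow ht0.le, ← Real.rpow_neg ht0.le]
    linarith [hAZ, h2mG]
  rcases P'.eq_empty_or_nonempty with hP | hP
  · -- no positive-side terms: send δ → ∞
    have hBP : ∀ j ∈ FP, B j = 0 := by
      intro j hj
      by_contra hne
      have hpos : 0 < B j := lt_of_le_of_ne (hB j) (Ne.symm hne)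
      have hmem : j ∈ P' :=
        Finset.mem_filter.mpr ⟨Finset.mem_univ j, (Finset.mem_filter.mp hj).2, hpos⟩
      rw [hP] at hmem
      exact absurd hmem (Finset.notMem_empty j)
    have hAZ : A ≤ Zsum := by
      refine aux_limit FN (fun i => θ₀ - θ i) B Zsum A
        (fun i hi => sub_pos.mpr (Finset.mem_filter.mp hi).2) ?_
      intro t ht
      have ht0 : 0 < t := lt_of_lt_of_le one_pos ht
      have h := key t ht0
      have hFP0 : (∑ j ∈ FP, t ^ (θ j - θ₀) * B j) = 0 :=
        Finset.sum_eq_zero fun j hj => by rw [hBP j hj, mul_zero]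
      rw [hFP0, add_zero] at h
      refine h.trans (le_of_eq ?_)
      congr 1
      refine Finset.sum_congr rfl fun i hi => ?_
      rw [neg_sub]
    linarith [hAZ, h2mG]
  -- main case: both sides have a positive term
  set dd : Fin m → Fin m → ℝ := fun i j => (B i / B j) ^ ((θ j - θ i)⁻¹) with hdddef
  set μ : Fin m → ℝ := fun i => P'.inf' hP (dd i) with hμdef
  set δ := N'.sup' hN μ with hδdef
  have hmemN : ∀ i ∈ N', θ i < θ₀ ∧ 0 < B i := fun i hi => (Finset.mem_filter.mp hi).2
  have hmemP : ∀ j ∈ P', θ₀ < θ j ∧ 0 < B j := fun j hj => (Finset.mem_filter.mp hj).2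
  have hddpos : ∀ i ∈ N', ∀ j ∈ P', 0 < dd i j := fun i hi j hj =>
    Real.rpow_pos_of_pos (div_pos (hmemN i hi).2 (hmemP j hj).2) _
  have hμpos : ∀ i ∈ N', 0 < μ i := fun i hi =>
    (Finset.lt_inf'_iff hP).mpr fun j hj => hddpos i hi j hj
  have hδpos : 0 < δ := by
    obtain ⟨i₀, hi₀, he⟩ := Finset.exists_mem_eq_sup' hN μ
    rw [hδdef, he]
    exact hμpos i₀ hi₀
  have hGle : ∀ i ∈ N', ∀ j ∈ P', G (i, j) ≤ Gsum := fun i hi j hj =>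
    Finset.single_le_sum hGnn
      (Finset.mem_filter.mpr ⟨Finset.mem_univ _, (hmemN i hi).1, (hmemP j hj).1⟩)
  have boundN : ∀ i ∈ FN, δ ^ (θ i - θ₀) * B i ≤ Gsum := by
    intro i hi
    rcases eq_or_lt_of_le (hB i) with h0 | hpos
    · rw [← h0, mul_zero]; exact hGsum
    have hiN : i ∈ N' :=
      Finset.mem_filter.mpr ⟨Finset.mem_univ _, (Finset.mem_filter.mp hi).2, hpos⟩
    obtain ⟨j, hj, hje⟩ := Finset.exists_mem_eq_inf' hP (dd i)
    have hle : dd i j ≤ δ := by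
      have h1 : μ i = dd i j := hje
      have h2 : μ i ≤ δ := Finset.le_sup' μ hiN
      rw [h1] at h2
      exact h2
    have hmono : δ ^ (θ i - θ₀) ≤ (dd i j) ^ (θ i - θ₀) :=
      Real.rpow_le_rpow_of_nonpos (hddpos i hiN j hj) hle
        (by linarith [(hmemN i hiN).1])
    calc δ ^ (θ i - θ₀) * B i ≤ (dd i j) ^ (θ i - θ₀) * B i :=
          mul_le_mul_of_nonneg_right hmono (hB i)
      _ = G (i, j) := (geom_calc (hmemN i hiN).1 (hmemP j hj).1 hpos (hmemP j hj).2).1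
      _ ≤ Gsum := hGle i hiN j hj
  have boundP : ∀ j ∈ FP, δ ^ (θ j - θ₀) * B j ≤ Gsum := by
    intro j hj
    rcases eq_or_lt_of_le (hB j) with h0 | hpos
    · rw [← h0, mul_zero]; exact hGsum
    have hjP : j ∈ P' :=
      Finset.mem_filter.mpr ⟨Finset.mem_univ _, (Finset.mem_filter.mp hj).2, hpos⟩
    obtain ⟨i, hi, hie⟩ := Finset.exists_mem_eq_sup' hN μ
    have hge : δ ≤ dd i j := by
      have h1 : δ = μ i := hie
      have h2 : μ i ≤ dd i j := Finset.inf'_le (dd i) hjP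
      linarith
    have hmono : δ ^ (θ j - θ₀) ≤ (dd i j) ^ (θ j - θ₀) :=
      Real.rpow_le_rpow hδpos.le hge (by linarith [(hmemP j hjP).1])
    calc δ ^ (θ j - θ₀) * B j ≤ (dd i j) ^ (θ j - θ₀) * B j :=
          mul_le_mul_of_nonneg_right hmono (hB j)
      _ = G (i, j) := (geom_calc (hmemN i hi).1 (hmemP j hjP).1 (hmemN i hi).2 hpos).2
      _ ≤ Gsum := hGle i hi j hjP
  have hcard : ∀ s : Finset (Fin m), (s.card : ℝ) ≤ m := by
    intro s
    exact_mod_cast (Finset.card_le_card (Finset.subset_univ s)).trans_eq (by simp)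
  have hNs : (∑ i ∈ FN, δ ^ (θ i - θ₀) * B i) ≤ m * Gsum := by
    calc (∑ i ∈ FN, δ ^ (θ i - θ₀) * B i) ≤ ∑ _i ∈ FN, Gsum := Finset.sum_le_sum boundN
      _ = FN.card * Gsum := by rw [Finset.sum_const, nsmul_eq_mul]
      _ ≤ m * Gsum := mul_le_mul_of_nonneg_right (hcard FN) hGsum
  have hPs : (∑ j ∈ FP, δ ^ (θ j - θ₀) * B j) ≤ m * Gsum := by
    calc (∑ j ∈ FP, δ ^ (θ j - θ₀) * B j) ≤ ∑ _j ∈ FP, Gsum := Finset.sum_le_sum boundP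
      _ = FP.card * Gsum := by rw [Finset.sum_const, nsmul_eq_mul]
      _ ≤ m * Gsum := mul_le_mul_of_nonneg_right (hcard FP) hGsum
  have h := key δ hδpos
  linarith [h, hNs, hPs]
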